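/- (The exponential and logarithmic maps are mutually inverse, direction 1.) Let κ < 0 and let x, y be points of the Poincaré ball of curvature κ with y ≠ x. Then exp^κ_x(log^κ_x(y)) = y. -/

import Mathlib

open Real Filter

open scoped RealInnerProductSpace

/-- Inverse hyperbolic tangent. -/
noncomputable def artanh (x : ℝ) : ℝ := (1 / 2) * Real.log ((1 + x) / (1 - x))

variable {E : Type*} [NormedAddCommGroup E] [InnerProductSpace ℝ E]

/-- Möbius (gyrovector) addition on the Poincaré ball of curvature `κ`. -/
noncomputable def mAdd (κ : ℝ) (x y : E) : E :=
  (1 - 2 * κ * ⟪x, y⟫ + κ ^ 2 * ‖x‖ ^ 2 * ‖y‖ ^ 2)⁻¹ •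
    ((1 - 2 * κ * ⟪x, y⟫ - κ * ‖y‖ ^ 2) • x + (1 + κ * ‖x‖ ^ 2) • y)

/-- Conformal factor `λκ(x) = 2 / (1 + κ‖x‖²)`. -/
noncomputable def lam (κ : ℝ) (x : E) : ℝ := 2 / (1 + κ * ‖x‖ ^ 2)

open Classical in
/-- Möbius scalar multiplication `r ⊗κ x`. -/
noncomputable def mSmul (κ r : ℝ) (x : E) : E :=
  if x = 0 then 0
  else ((1 / Real.sqrt (-κ)) * Real.tanh (r * _root_.artanh (Real.sqrt (-κ) * ‖x‖)) * ‖x‖⁻¹) • x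

open Classical in
/-- Exponential map of the Poincaré ball at `x` with curvature `κ`. -/
noncomputable def expMap (κ : ℝ) (x v : E) : E :=
  if v = 0 then x
  else mAdd κ x
    ((Real.tanh (Real.sqrt (-κ) * lam κ x * ‖v‖ / 2) / (Real.sqrt (-κ) * ‖v‖)) • v)

/-- Logarithmic map of the Poincaré ball at `x` with curvature `κ`. -/
noncomputable def logMap (κ : ℝ) (x y : E) : E :=
  ((2 / (Real.sqrt (-κ) * lam κ x)) * _root_.artanh (Real.sqrt (-κ) * ‖mAdd κ (-x) y‖) *
      ‖mAdd κ (-x) y‖⁻¹) • mAdd κ (-x) y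

/-- Geodesic distance of the Poincaré ball of curvature `κ`. -/
noncomputable def dK (κ : ℝ) (x y : E) : ℝ :=
  (2 / Real.sqrt (-κ)) * _root_.artanh (Real.sqrt (-κ) * ‖mAdd κ (-x) y‖)

/-- Membership in the Poincaré ball of curvature `κ`: `κ·‖x‖² > −1`. -/
def inBall (κ : ℝ) (x : E) : Prop := κ * ‖x‖ ^ 2 > -1

lemma tanh_artanh' {u : ℝ} (h1 : -1 < u) (h2 : u < 1) : Real.tanh (_root_.artanh u) = u := by
  have hv : (0:ℝ) < (1+u)/(1-u) := div_pos (by linarith) (by linarith)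
  set s := Real.exp ((1/2) * Real.log ((1+u)/(1-u))) with hs
  have hspos : 0 < s := Real.exp_pos _
  have hs2 : s^2 = (1+u)/(1-u) := by
    rw [hs, sq, ← Real.exp_add]
    rw [show (1:ℝ)/2 * Real.log ((1+u)/(1-u)) + 1/2 * Real.log ((1+u)/(1-u))
      = Real.log ((1+u)/(1-u)) by ring]
    exact Real.exp_log hv
  rw [_root_.artanh, Real.tanh_eq_sinh_div_cosh, Real.sinh_eq, Real.cosh_eq, Real.exp_neg, ← hs]
  have h1u : (1:ℝ) - u ≠ 0 := by linarith
  have hs2' : s^2 * (1-u) = 1+u := by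
    rw [hs2]; field_simp
  have hden : s + s⁻¹ ≠ 0 := by positivity
  have hsne : s ≠ 0 := ne_of_gt hspos
  rw [div_eq_iff (by positivity : (s + s⁻¹)/2 ≠ 0)]
  field_simp
  linear_combination hs2'

lemma artanh_pos' {u : ℝ} (h0 : 0 < u) (h1 : u < 1) : 0 < _root_.artanh u := by
  have : 1 < (1+u)/(1-u) := by
    rw [one_lt_div (by linarith)]; linarith
  have := Real.log_pos this
  rw [_root_.artanh]; linarith

lemma denom_pos' (κ : ℝ) (hκ : κ < 0) (x y : E) (hx : inBall κ x) (hy : inBall κ y) :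
    0 < 1 - 2*κ*⟪x,y⟫ + κ^2*‖x‖^2*‖y‖^2 := by
  have hx' : κ * ‖x‖ ^ 2 > -1 := hx
  have hy' : κ * ‖y‖ ^ 2 > -1 := hy
  have h3 : |⟪x,y⟫| ≤ ‖x‖*‖y‖ := abs_real_inner_le_norm x y
  obtain ⟨h4,h5⟩ := abs_le.1 h3
  nlinarith [sq_nonneg (1+κ*(‖x‖*‖y‖)), sq_nonneg (1-κ*(‖x‖*‖y‖)),
    mul_nonneg (norm_nonneg x) (norm_nonneg y), sq_nonneg (‖x‖-‖y‖), sq_nonneg (‖x‖+‖y‖)]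

lemma mAdd_norm' (κ : ℝ) (x y : E)
    (hD : (1 - 2 * κ * ⟪x, y⟫ + κ ^ 2 * ‖x‖ ^ 2 * ‖y‖ ^ 2) ≠ 0) :
    (1 - 2 * κ * ⟪x, y⟫ + κ ^ 2 * ‖x‖ ^ 2 * ‖y‖ ^ 2) * (1 + κ * ‖mAdd κ x y‖ ^ 2)
      = (1 + κ*‖x‖^2) * (1 + κ*‖y‖^2) := by
  have h3 : ⟪x,x⟫ = ‖x‖^2 := real_inner_self_eq_norm_sq x
  have h4 : ⟪y,y⟫ = ‖y‖^2 := real_inner_self_eq_norm_sq y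
  have h5 : ⟪y,x⟫ = ⟪x,y⟫ := real_inner_comm x y
  rw [mAdd, norm_smul, mul_pow, Real.norm_eq_abs, sq_abs]
  have h6 : ‖(1 - 2 * κ * ⟪x, y⟫ - κ * ‖y‖ ^ 2) • x + (1 + κ * ‖x‖ ^ 2) • y‖^2
      = (1 - 2 * κ * ⟪x, y⟫ - κ * ‖y‖ ^ 2)^2 * ‖x‖^2
        + 2*(1 - 2 * κ * ⟪x, y⟫ - κ * ‖y‖ ^ 2)*(1 + κ * ‖x‖ ^ 2)*⟪x,y⟫
        + (1 + κ * ‖x‖ ^ 2)^2 * ‖y‖^2 := by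
    rw [@norm_add_sq_real]
    simp only [norm_smul, real_inner_smul_left, real_inner_smul_right, mul_pow,
      Real.norm_eq_abs, sq_abs]
    ring
  rw [h6]
  field_simp
  ring

lemma mAdd_inBall' (κ : ℝ) (hκ : κ < 0) (x y : E) (hx : inBall κ x) (hy : inBall κ y) :
    inBall κ (mAdd κ x y) := by
  have hD := denom_pos' κ hκ x y hx hy
  have hkey := mAdd_norm' κ x y (ne_of_gt hD)
  have hx' : κ * ‖x‖ ^ 2 > -1 := hx
  have hy' : κ * ‖y‖ ^ 2 > -1 := hy
  have hpos : 0 < (1 + κ*‖x‖^2) * (1 + κ*‖y‖^2) :=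
    mul_pos (by linarith) (by linarith)
  show κ * ‖mAdd κ x y‖ ^ 2 > -1
  nlinarith [hkey, hD, hpos]

set_option maxHeartbeats 1000000 in
lemma mAdd_cancel' (κ : ℝ) (hκ : κ < 0) (x y : E) (hx : inBall κ x) (hy : inBall κ y) :
    mAdd κ x (mAdd κ (-x) y) = y := by
  have hxneg : inBall κ (-x) := by
    show κ * ‖(-x)‖ ^ 2 > -1
    rw [norm_neg]; exact hx
  have hd1 := denom_pos' κ hκ (-x) y hxneg hy
  rw [inner_neg_left, norm_neg] at hd1
  have hD1 : (1 + 2 * κ * ⟪x, y⟫ + κ ^ 2 * ‖x‖ ^ 2 * ‖y‖ ^ 2) ≠ 0 := by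
    intro h; rw [show (1:ℝ) - 2 * κ * -⟪x,y⟫ + κ ^ 2 * ‖x‖ ^ 2 * ‖y‖ ^ 2
      = 1 + 2 * κ * ⟪x,y⟫ + κ ^ 2 * ‖x‖ ^ 2 * ‖y‖ ^ 2 by ring, h] at hd1
    exact lt_irrefl 0 hd1
  have hwball : inBall κ (mAdd κ (-x) y) := mAdd_inBall' κ hκ (-x) y hxneg hy
  have hD2 : (1 - 2 * κ * ⟪x, mAdd κ (-x) y⟫
      + κ ^ 2 * ‖x‖ ^ 2 * ‖mAdd κ (-x) y‖ ^ 2) ≠ 0 :=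
    ne_of_gt (denom_pos' κ hκ x (mAdd κ (-x) y) hx hwball)
  have hw : mAdd κ (-x) y =
      (-((1 + 2 * κ * ⟪x, y⟫ + κ ^ 2 * ‖x‖ ^ 2 * ‖y‖ ^ 2)⁻¹ * (1 + 2*κ*⟪x, y⟫ - κ*‖y‖^2))) • x
      + ((1 + 2 * κ * ⟪x, y⟫ + κ ^ 2 * ‖x‖ ^ 2 * ‖y‖ ^ 2)⁻¹ * (1 + κ*‖x‖^2)) • y := by
    rw [mAdd]
    simp only [inner_neg_left, norm_neg, smul_neg]
    have : 1 - 2 * κ * -⟪x, y⟫ + κ ^ 2 * ‖x‖ ^ 2 * ‖y‖ ^ 2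
        = 1 + 2 * κ * ⟪x, y⟫ + κ ^ 2 * ‖x‖ ^ 2 * ‖y‖ ^ 2 := by ring
    rw [this]
    module
  have hxw : ⟪x, mAdd κ (-x) y⟫ =
      (-((1 + 2 * κ * ⟪x, y⟫ + κ ^ 2 * ‖x‖ ^ 2 * ‖y‖ ^ 2)⁻¹ * (1 + 2*κ*⟪x, y⟫ - κ*‖y‖^2))) * ‖x‖^2
      + ((1 + 2 * κ * ⟪x, y⟫ + κ ^ 2 * ‖x‖ ^ 2 * ‖y‖ ^ 2)⁻¹ * (1 + κ*‖x‖^2)) * ⟪x, y⟫ := by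
    rw [hw, inner_add_right, real_inner_smul_right, real_inner_smul_right,
      real_inner_self_eq_norm_sq]
  have hw2 : ‖mAdd κ (-x) y‖^2 =
      (-((1 + 2 * κ * ⟪x, y⟫ + κ ^ 2 * ‖x‖ ^ 2 * ‖y‖ ^ 2)⁻¹ * (1 + 2*κ*⟪x, y⟫ - κ*‖y‖^2)))^2 * ‖x‖^2
      + 2 * (-((1 + 2 * κ * ⟪x, y⟫ + κ ^ 2 * ‖x‖ ^ 2 * ‖y‖ ^ 2)⁻¹ * (1 + 2*κ*⟪x, y⟫ - κ*‖y‖^2)))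
          * ((1 + 2 * κ * ⟪x, y⟫ + κ ^ 2 * ‖x‖ ^ 2 * ‖y‖ ^ 2)⁻¹ * (1 + κ*‖x‖^2)) * ⟪x, y⟫
      + ((1 + 2 * κ * ⟪x, y⟫ + κ ^ 2 * ‖x‖ ^ 2 * ‖y‖ ^ 2)⁻¹ * (1 + κ*‖x‖^2))^2 * ‖y‖^2 := by
    rw [hw, @norm_add_sq_real]
    simp only [norm_smul, real_inner_smul_left, real_inner_smul_right, mul_pow,
      Real.norm_eq_abs, sq_abs, real_inner_self_eq_norm_sq]
    ring
  rw [hxw, hw2] at hD2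
  conv_lhs => rw [mAdd]
  rw [hxw, hw2, hw, inv_smul_eq_iff₀ hD2]
  match_scalars
  · field_simp
    ring
  · generalize hDD : (1 + 2 * κ * ⟪x, y⟫ + κ ^ 2 * ‖x‖ ^ 2 * ‖y‖ ^ 2) = D at *
    field_simp
    subst hDD
    ring

theorem expMap_logMap
    (κ : ℝ) (hκ : κ < 0) (x y : E) (hx : inBall κ x) (hy : inBall κ y) (hxy : y ≠ x) :
    expMap κ x (logMap κ x y) = y := by
  have hc : 0 < Real.sqrt (-κ) := Real.sqrt_pos.2 (by linarith)
  have hc2 : Real.sqrt (-κ) ^ 2 = -κ := Real.sq_sqrt (by linarith)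
  have hxneg : inBall κ (-x) := by
    show κ * ‖(-x)‖ ^ 2 > -1
    rw [norm_neg]; exact hx
  have hcan : mAdd κ x (mAdd κ (-x) y) = y := mAdd_cancel' κ hκ x y hx hy
  have hwball : inBall κ (mAdd κ (-x) y) := mAdd_inBall' κ hκ (-x) y hxneg hy
  rw [logMap]
  set w := mAdd κ (-x) y with hwdef
  have hwne : w ≠ 0 := by
    intro h
    apply hxy
    rw [← hcan, h]
    simp [mAdd]
  have hwn : 0 < ‖w‖ := norm_pos_iff.2 hwne
  have hwball' : κ * ‖w‖ ^ 2 > -1 := hwball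
  have hu0 : 0 < Real.sqrt (-κ) * ‖w‖ := mul_pos hc hwn
  have hu1 : Real.sqrt (-κ) * ‖w‖ < 1 := by
    nlinarith [sq_nonneg (Real.sqrt (-κ) * ‖w‖ - 1)]
  have hart : 0 < _root_.artanh (Real.sqrt (-κ) * ‖w‖) := artanh_pos' hu0 hu1
  have hlam : 0 < lam κ x := by
    have : κ * ‖x‖ ^ 2 > -1 := hx
    have h1 : 0 < 1 + κ * ‖x‖ ^ 2 := by linarith
    rw [lam]
    exact div_pos two_pos h1
  set s := (2 / (Real.sqrt (-κ) * lam κ x)) * _root_.artanh (Real.sqrt (-κ) * ‖w‖) * ‖w‖⁻¹ with hsdef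
  have hspos : 0 < s := by
    rw [hsdef]
    exact mul_pos (mul_pos (div_pos two_pos (mul_pos hc hlam)) hart) (inv_pos.2 hwn)
  rw [expMap, if_neg (smul_ne_zero (ne_of_gt hspos) hwne)]
  have hnv : ‖s • w‖ = s * ‖w‖ := by
    rw [norm_smul, Real.norm_eq_abs, abs_of_pos hspos]
  rw [hnv]
  have harg : Real.sqrt (-κ) * lam κ x * (s * ‖w‖) / 2 = _root_.artanh (Real.sqrt (-κ) * ‖w‖) := by
    rw [hsdef]
    field_simp
  rw [harg, tanh_artanh' (by linarith) hu1]
  have hkey : (Real.sqrt (-κ) * ‖w‖ / (Real.sqrt (-κ) * (s * ‖w‖))) • (s • w) = w := by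
    rw [smul_smul,
      show Real.sqrt (-κ) * ‖w‖ / (Real.sqrt (-κ) * (s * ‖w‖)) * s = 1 by
        field_simp,
      one_smul]
  rw [hkey]
  exact hcan
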